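/- Let h : ℕ → ℕ be strictly increasing with range Y, and let X ⊆ ℕ. If the density ρ(Y) exists, then ρ̲(h(X)) = ρ(Y) · ρ̲(X), where h(X) is the image of X under h. -/
import Mathlib


open Filter Topology
open scoped symmDiff Classical

/-- ρ_n(A): the density of A below n. -/
noncomputable def partialDensity (A : Set ℕ) (n : ℕ) : ℝ :=
  ((Finset.range n).filter (fun k => k ∈ A)).card / n

/-- Lower density ρ̲(A). -/
noncomputable def lowerDensity (A : Set ℕ) : ℝ := liminf (partialDensity A) atTop

/-- Upper density ρ̄(A). -/
noncomputable def upperDensity (A : Set ℕ) : ℝ := limsup (partialDensity A) atTop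

/-- A has density r. -/
def HasDensity (A : Set ℕ) (r : ℝ) : Prop := Tendsto (partialDensity A) atTop (𝓝 r)

/-- A set of naturals is computable. -/
def IsComputableSet (A : Set ℕ) : Prop := ComputablePred (· ∈ A)

/-- A is coarsely computable at density r. -/
def CoarselyComputableAt (A : Set ℕ) (r : ℝ) : Prop :=
  ∃ C : Set ℕ, IsComputableSet C ∧ r ≤ lowerDensity {n | n ∈ A ↔ n ∈ C}

/-- γ(A), the coarse computability bound. -/
noncomputable def gammaBound (A : Set ℕ) : ℝ := sSup {r | CoarselyComputableAt A r}

/-- A is partially computable at density r. -/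
def PartiallyComputableAt (A : Set ℕ) (r : ℝ) : Prop :=
  ∃ φ : ℕ →. Bool, Partrec φ ∧ (∀ n b, b ∈ φ n → (b = true ↔ n ∈ A)) ∧
    r ≤ lowerDensity φ.Dom

/-- α(A), the partial computability bound. -/
noncomputable def alphaBound (A : Set ℕ) : ℝ := sSup {r | PartiallyComputableAt A r}

/-- A is generically computable. -/
def GenericallyComputable (A : Set ℕ) : Prop := PartiallyComputableAt A 1

/-- A is coarsely computable. -/
def CoarselyComputable (A : Set ℕ) : Prop :=
  ∃ C : Set ℕ, IsComputableSet C ∧ HasDensity (A ∆ C) 0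

private lemma pd_nonneg (A : Set ℕ) (n : ℕ) : 0 ≤ partialDensity A n := by
  unfold partialDensity; positivity

private lemma pd_le_one (A : Set ℕ) (n : ℕ) : partialDensity A n ≤ 1 := by
  unfold partialDensity
  rcases Nat.eq_zero_or_pos n with h | h
  · simp [h]
  · rw [div_le_one (by positivity)]
    exact_mod_cast (Finset.card_filter_le _ _).trans (by simp)

private lemma liminf_le_liminf_comp (f : ℕ → ℝ) (m : ℕ → ℕ)
    (hm : Filter.Tendsto m Filter.atTop Filter.atTop)
    (h0 : ∀ n, 0 ≤ f n) (h1 : ∀ n, f n ≤ 1) :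
    Filter.liminf f Filter.atTop ≤ Filter.liminf (fun n => f (m n)) Filter.atTop := by
  have : Filter.liminf (f ∘ m) Filter.atTop = Filter.liminf f (Filter.map m Filter.atTop) :=
    Filter.liminf_comp f m Filter.atTop
  calc Filter.liminf f Filter.atTop
      ≤ Filter.liminf f (Filter.map m Filter.atTop) := by
        refine Filter.liminf_le_liminf_of_le hm ?_ ?_
        · exact Filter.isBoundedUnder_of ⟨0, h0⟩
        · haveI : (Filter.map m Filter.atTop).NeBot := Filter.map_neBot
          exact (Filter.isBoundedUnder_of (f := Filter.map m Filter.atTop)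
            ⟨1, h1⟩).isCoboundedUnder_ge
    _ = Filter.liminf (fun n => f (m n)) Filter.atTop := this.symm

theorem lowerDensity_image_strictMono (h : ℕ → ℕ) (X : Set ℕ) (r : ℝ)
    (hmono : StrictMono h) (hr : HasDensity (Set.range h) r) :
    lowerDensity (h '' X) = r * lowerDensity X := by
  classical
  set g : ℕ → ℕ := fun u => ((Finset.range u).filter (fun k => h k < u)).card with hg
  have hle : ∀ k, k ≤ h k := fun k => hmono.le_apply
  -- key: k < g u ↔ h k < u
  have key : ∀ u k, k < g u ↔ h k < u := by
    intro u k
    constructor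
    · intro hk
      by_contra hc
      push_neg at hc
      have hsub : (Finset.range u).filter (fun j => h j < u) ⊆ Finset.range k := by
        intro j hj
        simp only [Finset.mem_filter, Finset.mem_range] at hj ⊢
        by_contra hjk
        push_neg at hjk
        exact absurd (hmono.le_iff_le.mpr hjk) (not_le.mpr (lt_of_lt_of_le hj.2 hc))
      have := Finset.card_le_card hsub
      simp only [Finset.card_range] at this
      exact absurd hk (not_lt.mpr this)
    · intro hk
      have hsub : Finset.range (k + 1) ⊆ (Finset.range u).filter (fun j => h j < u) := by
        intro j hj
        simp only [Finset.mem_range] at hj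
        have hjk : j ≤ k := by omega
        have : h j ≤ h k := hmono.le_iff_le.mpr hjk
        simp only [Finset.mem_filter, Finset.mem_range]
        exact ⟨lt_of_le_of_lt (le_trans hjk (hle k)) hk, lt_of_le_of_lt this hk⟩
      have := Finset.card_le_card hsub
      simp only [Finset.card_range] at this
      exact this
  have hgh : ∀ n, g (h n) = n := by
    intro n
    have h1 : ¬ n < g (h n) := fun hc => lt_irrefl _ ((key (h n) n).mp hc)
    have h2 : ¬ g (h n) < n := by
      intro hc
      have : h (g (h n)) < h n := hmono hc
      exact lt_irrefl _ ((key (h n) (g (h n))).mpr this)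
    omega
  have hgmono : Monotone g := by
    intro u u' huu
    apply Finset.card_le_card
    intro j hj
    simp only [Finset.mem_filter, Finset.mem_range] at hj ⊢
    exact ⟨lt_of_lt_of_le hj.1 huu, lt_of_lt_of_le hj.2 huu⟩
  have hgtend : Filter.Tendsto g Filter.atTop Filter.atTop :=
    hgmono.tendsto_atTop_atTop fun b => ⟨h b, (hgh b).ge⟩
  -- counting lemma for images
  have himg : ∀ (S : Set ℕ) (u : ℕ),
      ((Finset.range (g u)).filter (fun k => k ∈ S)).card
        = ((Finset.range u).filter (fun m => m ∈ h '' S)).card := by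
    intro S u
    rw [← Finset.card_image_of_injective _ hmono.injective]
    congr 1
    ext m
    simp only [Finset.mem_image, Finset.mem_filter, Finset.mem_range, Set.mem_image]
    constructor
    · rintro ⟨k, ⟨hk, hkS⟩, rfl⟩
      exact ⟨(key u k).mp hk, k, hkS, rfl⟩
    · rintro ⟨hm, k, hkS, rfl⟩
      exact ⟨k, ⟨(key u k).mpr hm, hkS⟩, rfl⟩
  have hcountY : ∀ u, ((Finset.range u).filter (fun m => m ∈ Set.range h)).card = g u := by
    intro u
    have : (Set.range h) = h '' Set.univ := by simp
    rw [this, ← himg Set.univ u]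
    simp
  -- pointwise identity
  have hpoint : ∀ u, partialDensity (h '' X) u
      = partialDensity (Set.range h) u * partialDensity X (g u) := by
    intro u
    unfold partialDensity
    rw [hcountY u, ← himg X u]
    rcases Nat.eq_zero_or_pos (g u) with h0 | h0
    · simp [h0]
    · have hne : ((g u : ℝ)) ≠ 0 := Nat.cast_ne_zero.mpr h0.ne'
      rw [div_mul_div_comm, mul_comm (u : ℝ) (g u : ℝ),
        mul_div_mul_left _ _ hne]
  -- liminf of composition equals liminf
  have hcomp : Filter.liminf (fun u => partialDensity X (g u)) Filter.atTop
      = lowerDensity X := by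
    apply le_antisymm
    · have := liminf_le_liminf_comp (fun n => partialDensity X (g n)) h
        (hmono.tendsto_atTop) (fun n => pd_nonneg _ _) (fun n => pd_le_one _ _)
      simp only [hgh] at this
      exact this
    · exact liminf_le_liminf_comp (partialDensity X) g hgtend
        (fun n => pd_nonneg _ _) (fun n => pd_le_one _ _)
  -- boundedness facts
  have hY0 : 0 ≤ᶠ[Filter.atTop] partialDensity (Set.range h) :=
    Filter.Eventually.of_forall fun n => pd_nonneg _ _
  have hYb : Filter.IsBoundedUnder (· ≤ ·) Filter.atTop (partialDensity (Set.range h)) :=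
    Filter.isBoundedUnder_of ⟨1, fun n => pd_le_one _ _⟩
  have hX0 : 0 ≤ᶠ[Filter.atTop] (fun u => partialDensity X (g u)) :=
    Filter.Eventually.of_forall fun n => pd_nonneg _ _
  have hXb : Filter.IsBoundedUnder (· ≤ ·) Filter.atTop (fun u => partialDensity X (g u)) :=
    Filter.isBoundedUnder_of ⟨1, fun n => pd_le_one _ _⟩
  have hXcob : Filter.IsCoboundedUnder (· ≥ ·) Filter.atTop (fun u => partialDensity X (g u)) :=
    hXb.isCoboundedUnder_ge
  have hliminfY : Filter.liminf (partialDensity (Set.range h)) Filter.atTop = r := hr.liminf_eq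
  have hlimsupY : Filter.limsup (partialDensity (Set.range h)) Filter.atTop = r := hr.limsup_eq
  have heq : lowerDensity (h '' X)
      = Filter.liminf (partialDensity (Set.range h) * fun u => partialDensity X (g u))
          Filter.atTop := by
    unfold lowerDensity
    congr 1
    funext u
    exact hpoint u
  rw [heq, ← hcomp]
  apply le_antisymm
  · have := liminf_mul_le hY0 hYb hX0 hXcob
    rwa [hlimsupY] at this
  · have := le_liminf_mul hY0 hYb hX0 hXcob
    rwa [hliminfY] at this
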